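/- Let μ be a Borel probability measure on ℝ with compact support which is absolutely continuous with respect to Lebesgue measure with essentially bounded density. Then the function (s,t) ↦ log|s − t| is integrable with respect to the product measure μ ⊗ μ; in particular the logarithmic energy ∫∫ log|s − t| dμ(s) dμ(t) is finite (strictly greater than −∞). -/

import Mathlib

open MeasureTheory
open scoped ENNReal

lemma integrableOn_log_Ioc_one : IntegrableOn Real.log (Set.Ioc 0 1) volume := by
  have h : IntegrableOn (fun x : ℝ => -Real.log x) (Set.Ioc (0:ℝ) 1) volume := by
    apply intervalIntegral.integrableOn_deriv_of_nonneg
      (g := fun x => x + Real.negMulLog x)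
    · exact (continuous_id.add Real.continuous_negMulLog).continuousOn
    · intro x hx
      have h := (hasDerivAt_id x).add (Real.hasDerivAt_negMulLog (ne_of_gt hx.1))
      exact h.congr_deriv (by ring)
    · intro x hx
      simp only [neg_nonneg]
      exact Real.log_nonpos hx.1.le hx.2.le
  have h2 : (-(fun x : ℝ => -Real.log x)) = Real.log := by
    funext x; simp
  have h3 := h.neg
  rwa [h2] at h3

lemma integrableOn_log_abs (c : ℝ) :
    IntegrableOn (fun u : ℝ => Real.log |u|) (Set.Icc (-c) c) volume := by
  have hpos : IntegrableOn (fun u : ℝ => Real.log |u|) (Set.Icc 0 c) volume := by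
    rw [integrableOn_Icc_iff_integrableOn_Ioc]
    have hlog : IntegrableOn Real.log (Set.Ioc 0 c) volume := by
      have h2 : IntegrableOn Real.log (Set.Icc 1 c) volume := by
        apply ContinuousOn.integrableOn_compact isCompact_Icc
        exact Real.continuousOn_log.mono (fun x hx => by
          simp only [Set.mem_compl_iff, Set.mem_singleton_iff]
          intro h; rw [h] at hx; exact absurd hx.1 (by norm_num))
      refine (integrableOn_log_Ioc_one.union h2).mono_set ?_
      intro u hu
      rcases le_or_gt u 1 with h | h
      · exact Or.inl ⟨hu.1, h⟩
      · exact Or.inr ⟨h.le, hu.2⟩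
    refine hlog.congr_fun (fun x hx => ?_) measurableSet_Ioc
    rw [abs_of_pos hx.1]
  have hneg : IntegrableOn (fun u : ℝ => Real.log |u|) (Set.Icc (-c) 0) volume := by
    have hpre : Set.Icc (-c) (0:ℝ) = Neg.neg ⁻¹' (Set.Icc 0 c) := by
      ext x
      simp only [Set.mem_Icc, Set.mem_preimage]
      constructor
      · intro h; exact ⟨by linarith [h.1, h.2], by linarith [h.1, h.2]⟩
      · intro h; exact ⟨by linarith [h.1, h.2], by linarith [h.1, h.2]⟩
    rw [hpre]
    have := (Measure.measurePreserving_neg (volume : Measure ℝ)).integrableOn_comp_preimage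
      (Homeomorph.neg ℝ).measurableEmbedding (f := fun u : ℝ => Real.log |u|)
      (s := Set.Icc 0 c)
    rw [← this] at hpos
    refine hpos.congr_fun (fun x _ => ?_) ((measurableSet_Icc).preimage measurable_neg)
    simp [Function.comp]
  refine (hneg.union hpos).mono_set ?_
  intro u hu
  rcases le_or_gt u 0 with h | h
  · exact Or.inl ⟨hu.1, h⟩
  · exact Or.inr ⟨h.le, hu.2⟩

/-- If `μ` is a compactly supported Borel probability measure on `ℝ` with essentially bounded
density with respect to Lebesgue measure, then `(s,t) ↦ log |s − t|` is `μ ⊗ μ`-integrable;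
in particular the logarithmic energy `∫∫ log |s − t| dμ dμ` is finite. -/
theorem logarithmic_energy_finite (μ : Measure ℝ) [IsProbabilityMeasure μ]
    (hcompact : ∃ K : Set ℝ, IsCompact K ∧ μ Kᶜ = 0)
    (f : ℝ → ℝ) (hf : μ = MeasureTheory.volume.withDensity (fun t => ENNReal.ofReal (f t)))
    (M : ℝ) (hM : ∀ᵐ t ∂MeasureTheory.volume, f t ≤ M) :
    Integrable (fun p : ℝ × ℝ => Real.log |p.1 - p.2|) (μ.prod μ) := by
  obtain ⟨K, hK, hKc⟩ := hcompact
  -- find R > 0 with K ⊆ Icc (-R) R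
  obtain ⟨R, hR0, hKsub⟩ : ∃ R : ℝ, 0 < R ∧ K ⊆ Set.Icc (-R) R := by
    obtain ⟨r, hr⟩ := hK.isBounded.subset_closedBall 0
    refine ⟨max r 1, lt_of_lt_of_le one_pos (le_max_right _ _), fun x hx => ?_⟩
    have hx' := hr hx
    rw [Real.closedBall_eq_Icc] at hx'
    constructor
    · have := hx'.1; have h1 : -(max r 1) ≤ 0 - r := by
        simp only [zero_sub, neg_le_neg_iff]; exact le_max_left _ _
      linarith
    · have := hx'.2; have h1 : 0 + r ≤ max r 1 := by
        simp only [zero_add]; exact le_max_left _ _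
      linarith
  set I : Set ℝ := Set.Icc (-R) R with hI
  -- μ ≤ ofReal M • volume.restrict I
  have hle : μ ≤ (ENNReal.ofReal M) • (volume : Measure ℝ).restrict I := by
    rw [Measure.le_iff]
    intro A hA
    have hMK : MeasurableSet K := hK.measurableSet
    have h1 : μ A ≤ μ (A ∩ K) := by
      calc μ A ≤ μ (A ∩ K) + μ (A \ K) := measure_le_inter_add_diff μ A K
        _ = μ (A ∩ K) := by
            rw [measure_mono_null (Set.diff_subset_compl A K) hKc, add_zero]
    have h2 : μ (A ∩ K) = ∫⁻ x in A ∩ K, ENNReal.ofReal (f x) ∂volume := by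
      rw [hf, withDensity_apply _ (hA.inter hMK)]
    have h3 : ∫⁻ x in A ∩ K, ENNReal.ofReal (f x) ∂volume
        ≤ ∫⁻ _x in A ∩ K, ENNReal.ofReal M ∂volume := by
      refine lintegral_mono_ae ?_
      exact ae_restrict_of_ae (hM.mono fun x hx => ENNReal.ofReal_le_ofReal hx)
    have h4 : ∫⁻ _x in A ∩ K, ENNReal.ofReal M ∂volume
        = ENNReal.ofReal M * volume (A ∩ K) := setLIntegral_const _ _
    have h5 : volume (A ∩ K) ≤ volume (A ∩ I) :=
      measure_mono (Set.inter_subset_inter_right A hKsub)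
    calc μ A ≤ μ (A ∩ K) := h1
      _ = ∫⁻ x in A ∩ K, ENNReal.ofReal (f x) ∂volume := h2
      _ ≤ ENNReal.ofReal M * volume (A ∩ K) := h3.trans_eq h4
      _ ≤ ENNReal.ofReal M * volume (A ∩ I) := mul_le_mul_right h5 _
      _ = ((ENNReal.ofReal M) • (volume : Measure ℝ).restrict I) A := by
          rw [Measure.smul_apply, Measure.restrict_apply hA, smul_eq_mul]
  -- measurability
  have hmeas : Measurable (fun p : ℝ × ℝ => Real.log |p.1 - p.2|) :=
    Real.measurable_log.comp ((measurable_fst.sub measurable_snd).abs)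
  refine ⟨hmeas.aestronglyMeasurable, ?_⟩
  rw [hasFiniteIntegral_def]
  set F : ℝ × ℝ → ℝ≥0∞ := fun p => (‖Real.log |p.1 - p.2|‖₊ : ℝ≥0∞) with hF
  have hFmeas : Measurable F := hmeas.nnnorm.coe_nnreal_ennreal
  set C : ℝ≥0∞ := ∫⁻ u in Set.Icc (-(2*R)) (2*R), (‖Real.log |u|‖₊ : ℝ≥0∞) ∂volume with hC
  have hCfin : C < ∞ := (integrableOn_log_abs (2*R)).2
  have hginner : Measurable (fun u : ℝ => (‖Real.log |u|‖₊ : ℝ≥0∞)) :=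
    (Real.measurable_log.comp measurable_abs).nnnorm.coe_nnreal_ennreal
  -- inner bound
  have hinner : ∀ s ∈ I, (∫⁻ t in I, F (s, t) ∂volume) ≤ C := by
    intro s hs
    have hmp := Measure.measurePreserving_sub_left (volume : Measure ℝ) s
    have hkey : ∫⁻ t in (fun t => s - t) ⁻¹' (Set.Icc (-(2*R)) (2*R)),
        (‖Real.log |s - t|‖₊ : ℝ≥0∞) ∂volume = C :=
      hmp.setLIntegral_comp_preimage measurableSet_Icc hginner
    have hsub : I ⊆ (fun t => s - t) ⁻¹' (Set.Icc (-(2*R)) (2*R)) := by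
      intro t ht
      simp only [Set.mem_preimage, Set.mem_Icc]
      constructor
      · have := hs.1; have := ht.2; linarith
      · have := hs.2; have := ht.1; linarith
    calc (∫⁻ t in I, F (s, t) ∂volume)
        ≤ ∫⁻ t in (fun t => s - t) ⁻¹' (Set.Icc (-(2*R)) (2*R)),
            (‖Real.log |s - t|‖₊ : ℝ≥0∞) ∂volume := lintegral_mono_set hsub
      _ = C := hkey
  have hvolI : volume I ≠ ∞ := by
    rw [hI, Real.volume_Icc]; exact ENNReal.ofReal_ne_top
  -- main chain
  calc ∫⁻ p, F p ∂(μ.prod μ)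
      = ∫⁻ s, ∫⁻ t, F (s, t) ∂μ ∂μ := lintegral_prod F hFmeas.aemeasurable
    _ ≤ ∫⁻ s, (ENNReal.ofReal M * ∫⁻ t in I, F (s, t) ∂volume) ∂μ := by
        refine lintegral_mono fun s => ?_
        calc ∫⁻ t, F (s, t) ∂μ
            ≤ ∫⁻ t, F (s, t) ∂((ENNReal.ofReal M) • (volume : Measure ℝ).restrict I) :=
              lintegral_mono' hle le_rfl
          _ = ENNReal.ofReal M * ∫⁻ t in I, F (s, t) ∂volume := lintegral_smul_measure _ _
    _ ≤ ∫⁻ s, (ENNReal.ofReal M * ∫⁻ t in I, F (s, t) ∂volume)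
          ∂((ENNReal.ofReal M) • (volume : Measure ℝ).restrict I) :=
        lintegral_mono' hle le_rfl
    _ = ENNReal.ofReal M *
          ∫⁻ s in I, (ENNReal.ofReal M * ∫⁻ t in I, F (s, t) ∂volume) ∂volume :=
        lintegral_smul_measure _ _
    _ ≤ ENNReal.ofReal M * ∫⁻ _s in I, (ENNReal.ofReal M * C) ∂volume := by
        refine mul_le_mul_right ?_ _
        refine setLIntegral_mono measurable_const fun s hs => ?_
        exact mul_le_mul_right (hinner s hs) _
    _ = ENNReal.ofReal M * (ENNReal.ofReal M * C * volume I) := by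
        rw [setLIntegral_const]
    _ < ∞ := by
        exact ENNReal.mul_lt_top ENNReal.ofReal_lt_top
          (ENNReal.mul_lt_top (ENNReal.mul_lt_top ENNReal.ofReal_lt_top hCfin) hvolI.lt_top)
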